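/- For every signed permutation β ∈ B_n, N_1(β) + N_2(β) = -∑_{i ∈ Neg(β)} β(i), where Neg(β) = {i ∈ [n] : β(i) < 0}, N_1(β) = |Neg(β)|, and N_2(β) = |{{i,j} ⊆ [n], i ≠ j : β(i) + β(j) < 0}|. -/

import Mathlib

open Finset Polynomial

/-- The hyperoctahedral group `B n`, modeled as pairs (permutation, sign vector):
the signed permutation with window `β(i) = ±(σ(i)+1)`. -/
abbrev Bgrp (n : ℕ) := Equiv.Perm (Fin n) × (Fin n → Bool)

/-- The window entry `β(i)` (a nonzero integer). -/
def wdw {n : ℕ} (β : Bgrp n) (i : Fin n) : ℤ :=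
  (if β.2 i then -1 else 1) * ((β.1 i : ℤ) + 1)

/-- Window entry at a `ℕ` position (0-based), `0` out of range. -/
def wdwN {n : ℕ} (β : Bgrp n) (i : ℕ) : ℤ :=
  if h : i < n then wdw β ⟨i, h⟩ else 0

/-- Number of inversions of the window. -/
def invB {n : ℕ} (β : Bgrp n) : ℕ :=
  ((univ : Finset (Fin n × Fin n)).filter
    (fun p => p.1 < p.2 ∧ wdw β p.2 < wdw β p.1)).card

/-- The set of positions with negative entries. -/
def NegB {n : ℕ} (β : Bgrp n) : Finset (Fin n) :=
  univ.filter (fun i => wdw β i < 0)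

def N1 {n : ℕ} (β : Bgrp n) : ℕ := (NegB β).card

def N2 {n : ℕ} (β : Bgrp n) : ℕ :=
  ((univ : Finset (Fin n × Fin n)).filter
    (fun p => p.1 < p.2 ∧ wdw β p.1 + wdw β p.2 < 0)).card

/-- The order `-1 ≺ -2 ≺ ⋯ ≺ -n ≺ 1 ≺ 2 ≺ ⋯ ≺ n` on nonzero integers. -/
def precLt (a b : ℤ) : Prop :=
  (a < 0 ∧ b < 0 ∧ b < a) ∨ (a < 0 ∧ 0 < b) ∨ (0 < a ∧ 0 < b ∧ a < b)

instance (a b : ℤ) : Decidable (precLt a b) := by unfold precLt; infer_instance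

/-- Descent set of the window, with respect to `≺` (0-based positions). -/
def DesB {n : ℕ} (β : Bgrp n) : Finset ℕ :=
  (range (n-1)).filter (fun i => precLt (wdwN β (i+1)) (wdwN β i))

/-- Major index: sum of the (1-based) descent positions. -/
def majB {n : ℕ} (β : Bgrp n) : ℕ := ∑ i ∈ DesB β, (i+1)

/-- Flag-major index. -/
def fmaj {n : ℕ} (β : Bgrp n) : ℕ := 2 * majB β + N1 β

/-- Group multiplication (composition of signed permutations). -/
def bmul {n : ℕ} (β γ : Bgrp n) : Bgrp n :=
  (β.1 * γ.1, fun i => xor (γ.2 i) (β.2 (γ.1 i)))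

/-- The identity signed permutation. -/
def bone (n : ℕ) : Bgrp n := (1, fun _ => false)

/-- The Coxeter generators `s_0, s_1, …, s_{n-1}` of `B n`. -/
def BGens (n : ℕ) : Set (Bgrp n) :=
  { b | (∃ h : 0 < n, b = ((1 : Equiv.Perm (Fin n)), fun j => decide (j = (⟨0, h⟩ : Fin n)))) ∨
        (∃ (i : ℕ) (h : i + 1 < n),
          b = (Equiv.swap ⟨i, Nat.lt_of_succ_lt h⟩ ⟨i+1, h⟩, fun _ => false)) }

/-- Minimal length of an expression of `β` as a product of the generators of `B n`. -/
noncomputable def lenB {n : ℕ} (β : Bgrp n) : ℕ :=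
  sInf {k | ∃ l : List (Bgrp n), l.length = k ∧ (∀ g ∈ l, g ∈ BGens n) ∧
    l.foldr bmul (bone n) = β}

/-- The Coxeter generators `s_0^D, s_1, …, s_{n-1}` of `D n`. -/
def DGens (n : ℕ) : Set (Bgrp n) :=
  { b | (∃ h : 1 < n,
          b = (Equiv.swap ⟨0, Nat.lt_of_succ_lt h⟩ ⟨1, h⟩, fun (j : Fin n) => decide ((j : ℕ) < 2))) ∨
        (∃ (i : ℕ) (h : i + 1 < n),
          b = (Equiv.swap ⟨i, Nat.lt_of_succ_lt h⟩ ⟨i+1, h⟩, fun _ => false)) }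

/-- Minimal length of an expression as a product of the generators of `D n`. -/
noncomputable def lenD {n : ℕ} (β : Bgrp n) : ℕ :=
  sInf {k | ∃ l : List (Bgrp n), l.length = k ∧ (∀ g ∈ l, g ∈ DGens n) ∧
    l.foldr bmul (bone n) = β}

/-- The even-signed permutation group `D n` as a finset of `B n`. -/
def Dgrp (n : ℕ) : Finset (Bgrp n) := univ.filter (fun γ => Even (N1 γ))

/-- `Δ_n = {γ ∈ B_n : γ(n) > 0}`. -/
def DeltaSet (n : ℕ) : Finset (Bgrp n) := univ.filter (fun γ => 0 < wdwN γ (n-1))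

/-- `|γ|_n`: replace the last window entry by its absolute value. -/
def absLast {n : ℕ} (γ : Bgrp n) : Bgrp n :=
  (γ.1, fun i => if (i : ℕ) = n - 1 then false else γ.2 i)

/-- The `D`-major index. -/
def Dmaj {n : ℕ} (γ : Bgrp n) : ℕ := fmaj (absLast γ)

/-- `-β`: negate all window entries. -/
def negB {n : ℕ} (β : Bgrp n) : Bgrp n := (β.1, fun i => !β.2 i)

/-- Number of inversions of a permutation of `Fin n`. -/
def invS {n : ℕ} (σ : Equiv.Perm (Fin n)) : ℕ :=
  ((univ : Finset (Fin n × Fin n)).filter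
    (fun p => p.1 < p.2 ∧ σ p.2 < σ p.1)).card

/-- Major index of a permutation of `Fin n` (usual order). -/
def majS {n : ℕ} (σ : Equiv.Perm (Fin n)) : ℕ :=
  ∑ i ∈ (range (n-1)).filter
      (fun i => ∀ h : i + 1 < n, σ ⟨i+1, h⟩ < σ ⟨i, Nat.lt_of_succ_lt h⟩), (i+1)

/-- The `q`-analogue `[m]_q = 1 + q + ⋯ + q^{m-1}`, evaluated at a polynomial `q`. -/
noncomputable def qpoly (m : ℕ) (q : Polynomial ℤ) : Polynomial ℤ := ∑ k ∈ range m, q ^ k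

lemma wdw_cases {n : ℕ} (β : Bgrp n) (i : Fin n) :
    wdw β i = -((β.1 i : ℤ) + 1) ∨ wdw β i = (β.1 i : ℤ) + 1 := by
  unfold wdw; split
  · left; ring
  · right; ring

lemma wdw_natAbs {n : ℕ} (β : Bgrp n) (i : Fin n) :
    (wdw β i).natAbs = (β.1 i : ℕ) + 1 := by
  rcases wdw_cases β i with h | h <;> omega

lemma card_filter_perm_lt {n : ℕ} (σ : Equiv.Perm (Fin n)) (i : Fin n) :
    (univ.filter fun j => σ j < σ i).card = (σ i : ℕ) := by
  rw [← Fin.card_Iio (σ i)]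
  apply Finset.card_nbij (fun j => σ j)
  · intro a ha; simp only [Finset.mem_coe, mem_filter, mem_univ, true_and] at ha; simpa using ha
  · intro a _ b _ h; exact σ.injective h
  · intro b hb
    simp only [Finset.coe_Iio, Set.mem_Iio] at hb
    refine ⟨σ.symm b, ?_, by simp⟩
    simp only [Finset.coe_filter, Set.mem_setOf_eq, mem_univ, true_and]
    simpa using hb

lemma N2_eq {n : ℕ} (β : Bgrp n) : N2 β = ∑ i ∈ NegB β, (β.1 i : ℕ) := by
  classical
  have habs := wdw_natAbs β
  set f : Fin n × Fin n → Fin n :=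
    fun p => if (wdw β p.1).natAbs < (wdw β p.2).natAbs then p.2 else p.1 with hf
  unfold N2
  have hmem : ∀ p ∈ (univ : Finset (Fin n × Fin n)).filter
      (fun p => p.1 < p.2 ∧ wdw β p.1 + wdw β p.2 < 0), f p ∈ NegB β := by
    rintro ⟨a, b⟩ hp
    simp only [Finset.mem_filter, Finset.mem_univ, true_and] at hp
    obtain ⟨hab, hsum⟩ := hp
    have hane : (β.1 a : ℕ) ≠ (β.1 b : ℕ) := by
      intro h
      exact absurd (β.1.injective (Fin.val_injective h)) (ne_of_lt hab)
    have h1 := habs a; have h2 := habs b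
    have h1' := wdw_cases β a; have h2' := wdw_cases β b
    simp only [NegB, Finset.mem_filter, Finset.mem_univ, true_and, hf]
    split <;> omega
  rw [Finset.card_eq_sum_card_fiberwise hmem]
  refine Finset.sum_congr rfl fun i hi => ?_
  simp only [NegB, Finset.mem_filter, Finset.mem_univ, true_and] at hi
  rw [Finset.filter_filter, ← card_filter_perm_lt β.1 i]
  apply Finset.card_nbij' (fun p => if p.1 = i then p.2 else p.1)
    (fun j => if j < i then ((j, i) : Fin n × Fin n) else (i, j))
  · rintro ⟨a, b⟩ hp
    simp only [Finset.mem_coe, Finset.mem_filter, Finset.mem_univ, true_and, hf] at hp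
    obtain ⟨⟨hab, hsum⟩, hfp⟩ := hp
    have h1 := habs a; have h2 := habs b
    have hane : (β.1 a : ℕ) ≠ (β.1 b : ℕ) := by
      intro h
      exact absurd (β.1.injective (Fin.val_injective h)) (ne_of_lt hab)
    simp only [Finset.mem_coe, Finset.mem_filter, Finset.mem_univ, true_and]
    split_ifs at hfp with hcond
    · -- hfp : b = i
      have hai : a ≠ i := by
        rintro rfl
        exact absurd hfp.symm (ne_of_lt hab)
      rw [if_neg hai, ← hfp]
      exact Fin.lt_def.mpr (by omega)
    · -- hfp : a = i
      rw [if_pos hfp, ← hfp]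
      exact Fin.lt_def.mpr (by omega)
  · intro j hj
    simp only [Finset.mem_coe, Finset.mem_filter, Finset.mem_univ, true_and] at hj
    have hji : (β.1 j : ℕ) < (β.1 i : ℕ) := hj
    have h1 := habs j; have h1' := wdw_cases β j
    have h3 := habs i; have h3' := wdw_cases β i
    have hjne : j ≠ i := by
      intro h; subst h; exact lt_irrefl _ hji
    simp only [Finset.mem_coe, Finset.mem_filter, Finset.mem_univ, true_and, hf]
    by_cases hlt : j < i
    · rw [if_pos hlt]
      refine ⟨⟨hlt, ?_⟩, ?_⟩
      · show wdw β j + wdw β i < 0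
        omega
      · show (if (wdw β j).natAbs < (wdw β i).natAbs then i else j) = i
        rw [if_pos (by omega)]
    · have hij : i < j := lt_of_le_of_ne (not_lt.mp hlt) (Ne.symm hjne)
      rw [if_neg hlt]
      refine ⟨⟨hij, ?_⟩, ?_⟩
      · show wdw β i + wdw β j < 0
        omega
      · show (if (wdw β i).natAbs < (wdw β j).natAbs then j else i) = i
        rw [if_neg (by omega)]
  · rintro ⟨a, b⟩ hp
    simp only [Finset.mem_coe, Finset.mem_filter, Finset.mem_univ, true_and, hf] at hp
    obtain ⟨⟨hab, hsum⟩, hfp⟩ := hp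
    split_ifs at hfp with hcond
    · -- hfp : b = i
      have hai : a ≠ i := by
        rintro rfl
        exact absurd hfp.symm (ne_of_lt hab)
      dsimp only; rw [if_neg hai, ← hfp, if_pos hab]
    · -- hfp : a = i
      dsimp only; rw [if_pos hfp, ← hfp, if_neg (not_lt.mpr hab.le)]
  · intro j hj
    simp only [Finset.mem_coe, Finset.mem_filter, Finset.mem_univ, true_and] at hj
    have hjne : j ≠ i := by
      intro h; subst h; exact lt_irrefl _ hj
    by_cases hlt : j < i
    · dsimp only; rw [if_pos hlt]
      dsimp only
      rw [if_neg hjne]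
    · dsimp only; rw [if_neg hlt]
      dsimp only
      rw [if_pos rfl]

/-- `N₁(β) + N₂(β) = -∑_{i ∈ Neg(β)} β(i)`. -/
theorem stmt1 (n : ℕ) (β : Bgrp n) :
    (N1 β + N2 β : ℤ) = -∑ i ∈ NegB β, wdw β i := by
  classical
  have key : -∑ i ∈ NegB β, wdw β i = ∑ i ∈ NegB β, ((β.1 i : ℤ) + 1) := by
    rw [← Finset.sum_neg_distrib]
    refine Finset.sum_congr rfl fun i hi => ?_
    simp only [NegB, Finset.mem_filter, Finset.mem_univ, true_and] at hi
    rcases wdw_cases β i with h | h <;> omega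
  rw [key, Finset.sum_add_distrib, Finset.sum_const, nsmul_eq_mul, mul_one]
  have h2 : (N2 β : ℤ) = ∑ i ∈ NegB β, ((β.1 i : ℕ) : ℤ) := by
    rw [N2_eq β]; push_cast; ring
  unfold N1
  rw [h2]
  ring
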